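/- For any measurable μ, μ̃ : [0,1] → ℝ with μ - μ̃ ∈ L¹(0,1) and σ > 0, ‖f_{μ,σ} - f_{μ̃,σ}‖_1 ≤ C ‖μ - μ̃‖_{L¹(0,1)} / σ for an absolute constant C > 0, where f_{μ,σ}(y) = ∫_0^1 φ_σ(y - μ(x)) dx. -/

import Mathlib

open MeasureTheory Real Set

/-- The Gaussian density with mean 0 and standard deviation `σ`. -/
noncomputable def phi (σ u : ℝ) : ℝ :=
  (Real.sqrt (2 * Real.pi * σ ^ 2))⁻¹ * Real.exp (-u ^ 2 / (2 * σ ^ 2))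

lemma phi_nonneg (σ u : ℝ) : 0 ≤ phi σ u := by
  unfold phi; positivity

lemma phi_le (σ u : ℝ) : phi σ u ≤ (Real.sqrt (2 * Real.pi * σ ^ 2))⁻¹ := by
  unfold phi
  have h1 : Real.exp (-u ^ 2 / (2 * σ ^ 2)) ≤ 1 := by
    rw [Real.exp_le_one_iff]
    rcases eq_or_ne σ 0 with h | h
    · simp [h]
    · exact div_nonpos_of_nonpos_of_nonneg (neg_nonpos.2 (sq_nonneg u)) (by positivity)
  calc _ ≤ (Real.sqrt (2 * Real.pi * σ ^ 2))⁻¹ * 1 := by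
        apply mul_le_mul_of_nonneg_left h1 (by positivity)
    _ = _ := mul_one _

lemma phi_cont (σ : ℝ) : Continuous (phi σ) := by
  unfold phi; fun_prop

lemma phi_eq (σ : ℝ) (hσ : 0 < σ) (u : ℝ) :
    phi σ u = (Real.sqrt (2 * Real.pi * σ ^ 2))⁻¹ * Real.exp (-(2*σ^2)⁻¹ * u ^ 2) := by
  unfold phi; ring_nf

-- integrability of |u| * phi σ u
lemma int_abs_phi (σ : ℝ) (hσ : 0 < σ) : Integrable (fun u => |u| * phi σ u) := by
  have hb : 0 < (2*σ^2)⁻¹ := by positivity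
  have := (integrable_mul_exp_neg_mul_sq hb).abs
  have h2 := this.const_mul (Real.sqrt (2 * Real.pi * σ ^ 2))⁻¹
  apply h2.congr
  filter_upwards with u
  rw [phi_eq σ hσ]
  rw [abs_mul, abs_of_nonneg (Real.exp_pos _).le]
  ring

lemma ioi_val {b : ℝ} (hb : 0 < b) :
    ∫ x in Ioi (0:ℝ), x * Real.exp (-b * x ^ 2) = (2*b)⁻¹ := by
  have hderiv : ∀ x ∈ Ici (0:ℝ), HasDerivAt (fun x => -(2*b)⁻¹ * Real.exp (-b * x ^ 2))
      (x * Real.exp (-b * x ^ 2)) x := by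
    intro x _
    have h1 : HasDerivAt (fun x : ℝ => -b * x ^ 2) (-b * (2 * x)) x := by
      simpa using ((hasDerivAt_pow 2 x).const_mul (-b))
    have h2 := (h1.exp).const_mul (-(2*b)⁻¹)
    refine h2.congr_deriv ?_
    field_simp [hb.ne']
  have htend : Filter.Tendsto (fun x : ℝ => -(2*b)⁻¹ * Real.exp (-b * x ^ 2))
      Filter.atTop (nhds 0) := by
    rw [show (0:ℝ) = -(2*b)⁻¹ * 0 by ring]
    apply Filter.Tendsto.const_mul
    apply Real.tendsto_exp_atBot.comp
    rw [show (fun x : ℝ => -b * x ^ 2) = (fun x => -(b * x ^ 2)) by ext x; ring]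
    apply Filter.tendsto_neg_atBot_iff.mpr
    apply Filter.Tendsto.const_mul_atTop hb
    exact Filter.tendsto_pow_atTop (by norm_num)
  have := integral_Ioi_of_hasDerivAt_of_tendsto' hderiv
    ((integrable_mul_exp_neg_mul_sq hb).integrableOn) htend
  rw [this]; simp

lemma phi_even (σ u : ℝ) : phi σ |u| = phi σ u := by
  unfold phi; rw [sq_abs]

lemma J_le (σ : ℝ) (hσ : 0 < σ) : ∫ u, |u| * phi σ u ≤ σ := by
  have hb : 0 < (2*σ^2)⁻¹ := by positivity
  have h1 : (fun u : ℝ => |u| * phi σ u) = (fun u => u * phi σ u) ∘ abs := by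
    ext u; simp [Function.comp, phi_even]
  have h2 : ∫ u, |u| * phi σ u = 2 * ∫ u in Ioi (0:ℝ), u * phi σ u := by
    have := integral_comp_abs (f := fun t => t * phi σ t)
    simpa [phi_even] using this
  have h3 : ∫ u in Ioi (0:ℝ), u * phi σ u
      = (Real.sqrt (2 * Real.pi * σ ^ 2))⁻¹ * (2*(2*σ^2)⁻¹)⁻¹ := by
    have : ∀ u : ℝ, u * phi σ u
        = (Real.sqrt (2 * Real.pi * σ ^ 2))⁻¹ * (u * Real.exp (-(2*σ^2)⁻¹ * u ^ 2)) := by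
      intro u; rw [phi_eq σ hσ]; ring
    simp_rw [this]
    rw [integral_const_mul, ioi_val hb]
  rw [h2, h3]
  have hsqrt : Real.sqrt (2 * Real.pi * σ ^ 2) = Real.sqrt (2 * Real.pi) * σ := by
    rw [show 2 * Real.pi * σ ^ 2 = (2 * Real.pi) * σ ^ 2 by ring, Real.sqrt_mul (by positivity),
      Real.sqrt_sq hσ.le]
  have hpi : (2:ℝ) ≤ Real.sqrt (2 * Real.pi) := by
    rw [show Real.sqrt (2 * Real.pi) = Real.sqrt (2 * Real.pi) from rfl]
    nlinarith [Real.sq_sqrt (by positivity : (0:ℝ) ≤ 2 * Real.pi), Real.sqrt_nonneg (2*Real.pi),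
      Real.pi_gt_three]
  have hs : 0 < Real.sqrt (2 * Real.pi) := lt_of_lt_of_le (by norm_num) hpi
  rw [hsqrt]
  have h4 : (2*(2*σ^2)⁻¹)⁻¹ = σ^2 := by
    rw [mul_inv, inv_inv]; field_simp
  rw [h4]
  have heq : 2 * ((Real.sqrt (2*Real.pi)*σ)⁻¹ * σ^2) = 2 * σ / Real.sqrt (2*Real.pi) := by
    field_simp
  rw [heq, div_le_iff₀ hs]
  nlinarith

lemma phi_hasDeriv (σ : ℝ) (hσ : 0 < σ) (y t : ℝ) :
    HasDerivAt (fun t => phi σ (y - t)) (phi σ (y - t) * ((y - t) / σ^2)) t := by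
  have h1 : HasDerivAt (fun t : ℝ => y - t) (-1) t := by
    simpa using (hasDerivAt_id t).const_sub y
  set u := y - t with hu
  have h2 : HasDerivAt (fun u : ℝ => -u ^ 2 / (2 * σ ^ 2)) (-(2*u^1)/(2*σ^2)) u :=
    ((hasDerivAt_pow 2 u).neg).div_const (2*σ^2)
  have h3 : HasDerivAt (fun u : ℝ => phi σ u)
      ((Real.sqrt (2 * Real.pi * σ ^ 2))⁻¹ * (Real.exp (-u ^ 2 / (2 * σ ^ 2)) * (-(2*u^1)/(2*σ^2)))) u :=
    (h2.exp).const_mul _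
  have h4 := h3.comp t h1
  refine h4.congr_deriv ?_
  unfold phi
  field_simp

lemma deriv_cont (σ : ℝ) (hσ : 0 < σ) (y : ℝ) :
    Continuous (fun t => phi σ (y - t) * ((y - t) / σ^2)) := by
  have := phi_cont σ
  fun_prop

lemma pointwise_ftc (σ : ℝ) (hσ : 0 < σ) (y a b : ℝ) (hab : a ≤ b) :
    |phi σ (y - a) - phi σ (y - b)| ≤ ∫ t in a..b, phi σ (y - t) * |y - t| / σ^2 := by
  have hftc : ∫ t in a..b, phi σ (y - t) * ((y - t) / σ^2) = phi σ (y - b) - phi σ (y - a) :=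
    intervalIntegral.integral_eq_sub_of_hasDerivAt (fun t _ => phi_hasDeriv σ hσ y t)
      ((deriv_cont σ hσ y).intervalIntegrable a b)
  rw [abs_sub_comm, ← hftc]
  calc |∫ t in a..b, phi σ (y - t) * ((y - t) / σ^2)|
      ≤ ∫ t in a..b, |phi σ (y - t) * ((y - t) / σ^2)| :=
        intervalIntegral.abs_integral_le_integral_abs hab
    _ = ∫ t in a..b, phi σ (y - t) * |y - t| / σ^2 := by
        congr 1; ext t
        rw [abs_mul, abs_of_nonneg (phi_nonneg σ _), abs_div, abs_of_nonneg (by positivity : (0:ℝ) ≤ σ^2)]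
        ring

lemma inner_bound (σ : ℝ) (hσ : 0 < σ) (t : ℝ) :
    ∫⁻ y, ENNReal.ofReal (phi σ (y - t) * |y - t| / σ^2) ≤ ENNReal.ofReal (1 / σ) := by
  have h1 : (∫⁻ y, ENNReal.ofReal (phi σ (y - t) * |y - t| / σ^2))
      = ∫⁻ u, ENNReal.ofReal (phi σ u * |u| / σ^2) :=
    lintegral_sub_right_eq_self (fun u => ENNReal.ofReal (phi σ u * |u| / σ^2)) t
  rw [h1]
  have hint : Integrable (fun u => phi σ u * |u| / σ^2) := by
    have := (int_abs_phi σ hσ).div_const (σ^2)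
    apply this.congr
    filter_upwards with u; ring
  rw [← ofReal_integral_eq_lintegral_ofReal hint
    (Filter.Eventually.of_forall fun u => div_nonneg (mul_nonneg (phi_nonneg _ _) (abs_nonneg _)) (sq_nonneg σ))]
  apply ENNReal.ofReal_le_ofReal
  have : ∫ u, phi σ u * |u| / σ^2 = (∫ u, |u| * phi σ u) / σ^2 := by
    rw [← integral_div]; congr 1; ext u; ring
  rw [this, div_le_iff₀ (by positivity), one_div, inv_mul_eq_div]
  calc (∫ u, |u| * phi σ u) ≤ σ := J_le σ hσ
    _ ≤ σ^2/σ := by rw [sq]; field_simp; rfl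

lemma kernel_le (σ : ℝ) (hσ : 0 < σ) (a b : ℝ) (hab : a ≤ b) :
    ∫⁻ y, ENNReal.ofReal (|phi σ (y - a) - phi σ (y - b)|)
      ≤ ENNReal.ofReal ((b - a) / σ) := by
  have hmeas : AEMeasurable (Function.uncurry fun y t =>
      ENNReal.ofReal (phi σ (y - t) * |y - t| / σ^2))
      ((volume : Measure ℝ).prod ((volume : Measure ℝ).restrict (Ioc a b))) := by
    apply Continuous.aemeasurable
    apply ENNReal.continuous_ofReal.comp
    have := phi_cont σ
    fun_prop
  calc ∫⁻ y, ENNReal.ofReal (|phi σ (y - a) - phi σ (y - b)|)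
      ≤ ∫⁻ y, ∫⁻ t in Ioc a b, ENNReal.ofReal (phi σ (y - t) * |y - t| / σ^2) := by
        apply lintegral_mono
        intro y
        have hp := pointwise_ftc σ hσ y a b hab
        have hi : IntegrableOn (fun t => phi σ (y - t) * |y - t| / σ^2) (Ioc a b) := by
          apply Continuous.integrableOn_Ioc
          have := phi_cont σ
          fun_prop
        calc ENNReal.ofReal (|phi σ (y - a) - phi σ (y - b)|)
            ≤ ENNReal.ofReal (∫ t in a..b, phi σ (y - t) * |y - t| / σ^2) :=
              ENNReal.ofReal_le_ofReal hp
          _ = ENNReal.ofReal (∫ t in Ioc a b, phi σ (y - t) * |y - t| / σ^2) := by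
              rw [intervalIntegral.integral_of_le hab]
          _ = ∫⁻ t in Ioc a b, ENNReal.ofReal (phi σ (y - t) * |y - t| / σ^2) :=
              ofReal_integral_eq_lintegral_ofReal hi
                (Filter.Eventually.of_forall fun t => div_nonneg (mul_nonneg (phi_nonneg _ _) (abs_nonneg _)) (sq_nonneg σ))
    _ = ∫⁻ t in Ioc a b, ∫⁻ y, ENNReal.ofReal (phi σ (y - t) * |y - t| / σ^2) :=
        lintegral_lintegral_swap hmeas
    _ ≤ ∫⁻ t in Ioc a b, ENNReal.ofReal (1 / σ) :=
        lintegral_mono' le_rfl (fun t => inner_bound σ hσ t)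
    _ = ENNReal.ofReal (1 / σ) * volume (Ioc a b) := by
        rw [setLIntegral_const]
    _ ≤ ENNReal.ofReal ((b - a) / σ) := by
        rw [Real.volume_Ioc, ← ENNReal.ofReal_mul (by positivity)]
        apply ENNReal.ofReal_le_ofReal
        rw [div_mul_eq_mul_div, one_mul]

lemma kernel_abs (σ : ℝ) (hσ : 0 < σ) (a b : ℝ) :
    ∫⁻ y, ENNReal.ofReal (|phi σ (y - a) - phi σ (y - b)|)
      ≤ ENNReal.ofReal (|a - b| / σ) := by
  rcases le_total a b with hab | hab
  · rw [abs_of_nonpos (by linarith), neg_sub]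
    exact kernel_le σ hσ a b hab
  · rw [abs_of_nonneg (by linarith)]
    calc _ = ∫⁻ y, ENNReal.ofReal (|phi σ (y - b) - phi σ (y - a)|) := by
          simp_rw [abs_sub_comm]
      _ ≤ _ := kernel_le σ hσ b a hab

/-- `f_{μ,σ}(y) = ∫_0^1 φ_σ(y - μ x) dx`. -/
noncomputable def fdens (μ : ℝ → ℝ) (σ y : ℝ) : ℝ :=
  ∫ x in Set.Icc (0:ℝ) 1, phi σ (y - μ x)

lemma fdens_integrableOn (μ : ℝ → ℝ) (hμ : Measurable μ) (σ y : ℝ) :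
    IntegrableOn (fun x => phi σ (y - μ x)) (Set.Icc (0:ℝ) 1) := by
  apply Integrable.mono' (integrable_const ((Real.sqrt (2 * Real.pi * σ ^ 2))⁻¹))
  · exact ((phi_cont σ).measurable.comp (measurable_const.sub hμ)).aestronglyMeasurable
  · filter_upwards with x
    rw [Real.norm_eq_abs, abs_of_nonneg (phi_nonneg _ _)]
    exact phi_le σ _

lemma fdens_stronglyMeasurable (μ : ℝ → ℝ) (hμ : Measurable μ) (σ : ℝ) :
    StronglyMeasurable (fun y => fdens μ σ y) := by
  have hf : StronglyMeasurable (fun p : ℝ × ℝ => phi σ (p.1 - μ p.2)) :=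
    ((phi_cont σ).measurable.comp (measurable_fst.sub (hμ.comp measurable_snd))).stronglyMeasurable
  exact hf.integral_prod_right'

/-- L¹ stability in the transfer function:
`‖f_{μ,σ} - f_{μ̃,σ}‖₁ ≤ C ‖μ - μ̃‖_{L¹(0,1)}/σ` for an absolute constant `C`. -/
theorem L1_stability_fdens :
    ∃ C > 0, ∀ (μ μt : ℝ → ℝ), Measurable μ → Measurable μt →
      IntegrableOn (fun x => |μ x - μt x|) (Set.Icc (0:ℝ) 1) →
      ∀ σ : ℝ, 0 < σ →
      (∫ y, |fdens μ σ y - fdens μt σ y|) ≤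
        C * (∫ x in Set.Icc (0:ℝ) 1, |μ x - μt x|) / σ := by
  refine ⟨1, one_pos, fun μ μt hμ hμt hL1 σ hσ => ?_⟩
  have hm1 := fdens_stronglyMeasurable μ hμ σ
  have hm2 := fdens_stronglyMeasurable μt hμt σ
  have habs : AEStronglyMeasurable (fun y => |fdens μ σ y - fdens μt σ y|) volume :=
    ((hm1.measurable.sub hm2.measurable).abs).aestronglyMeasurable
  rw [integral_eq_lintegral_of_nonneg_ae (Filter.Eventually.of_forall fun y => abs_nonneg _) habs]
  have hRHS : 0 ≤ 1 * (∫ x in Set.Icc (0:ℝ) 1, |μ x - μt x|) / σ := by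
    have : 0 ≤ ∫ x in Set.Icc (0:ℝ) 1, |μ x - μt x| :=
      integral_nonneg fun x => abs_nonneg _
    positivity
  apply ENNReal.toReal_le_of_le_ofReal hRHS
  have hswapmeas : AEMeasurable (Function.uncurry fun y x =>
      ENNReal.ofReal |phi σ (y - μ x) - phi σ (y - μt x)|)
      ((volume : Measure ℝ).prod ((volume : Measure ℝ).restrict (Set.Icc 0 1))) := by
    apply Measurable.aemeasurable
    apply ENNReal.measurable_ofReal.comp
    apply Measurable.abs
    exact ((phi_cont σ).measurable.comp (measurable_fst.sub (hμ.comp measurable_snd))).sub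
      ((phi_cont σ).measurable.comp (measurable_fst.sub (hμt.comp measurable_snd)))
  calc ∫⁻ y, ENNReal.ofReal |fdens μ σ y - fdens μt σ y|
      ≤ ∫⁻ y, ∫⁻ x in Set.Icc (0:ℝ) 1,
          ENNReal.ofReal |phi σ (y - μ x) - phi σ (y - μt x)| := by
        apply lintegral_mono
        intro y
        have hsub : fdens μ σ y - fdens μt σ y
            = ∫ x in Set.Icc (0:ℝ) 1, (phi σ (y - μ x) - phi σ (y - μt x)) := by
          rw [integral_sub (fdens_integrableOn μ hμ σ y) (fdens_integrableOn μt hμt σ y)]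
          rfl
        simp only []
        rw [hsub, ← Real.enorm_eq_ofReal_abs]
        refine (enorm_integral_le_lintegral_enorm _).trans ?_
        apply lintegral_mono
        intro x
        simp only []
        rw [Real.enorm_eq_ofReal_abs]
    _ = ∫⁻ x in Set.Icc (0:ℝ) 1, ∫⁻ y,
          ENNReal.ofReal |phi σ (y - μ x) - phi σ (y - μt x)| :=
        lintegral_lintegral_swap hswapmeas
    _ ≤ ∫⁻ x in Set.Icc (0:ℝ) 1, ENNReal.ofReal (|μ x - μt x| / σ) :=
        lintegral_mono' le_rfl fun x => kernel_abs σ hσ (μ x) (μt x)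
    _ ≤ ENNReal.ofReal (1 * (∫ x in Set.Icc (0:ℝ) 1, |μ x - μt x|) / σ) := by
        have hint : Integrable (fun x => |μ x - μt x| / σ)
            ((volume : Measure ℝ).restrict (Set.Icc 0 1)) := hL1.div_const σ
        rw [← ofReal_integral_eq_lintegral_ofReal hint
          (Filter.Eventually.of_forall fun x => div_nonneg (abs_nonneg _) hσ.le)]
        apply ENNReal.ofReal_le_ofReal
        rw [integral_div, one_mul]
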